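/- arXiv:2108.12024 — 2 statements merged into one kernel-verified Lean document; each statement's English description precedes it below -/
import Mathlib

section
/- The function e₂(R) = 2(R⁴ - 18R² + 9)/(√3·R·(R² + 3)^(3/2)) solves the stationary linearized equation e₂''(R) + (2/R)e₂'(R) + 45·e₂(R)/(3 + R²)² = 0 for all R > 0. -/
open Real

lemma rp_half (x:ℝ) (hx : 0 ≤ x) (n:ℕ) : x ^ ((n:ℝ)/2) = Real.sqrt x ^ n := by
  rw [Real.sqrt_eq_rpow, ← Real.rpow_natCast (x ^ ((1:ℝ)/2)) n, ← Real.rpow_mul hx]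
  ring_nf

noncomputable def gg (R:ℝ) : ℝ := 2/Real.sqrt 3 * (45*R^4-90*R^2-27) / (R^2 * (R^2+3) ^ ((5:ℝ)/2))

lemma hasDeriv_e2 (R:ℝ) (hR:0<R) :
    HasDerivAt (fun x => 2*(x^4-18*x^2+9)/(Real.sqrt 3 * x * (x^2+3)^((3:ℝ)/2))) (gg R) R := by
  have h3 : (0:ℝ) < Real.sqrt 3 := by positivity
  have hs : (0:ℝ) < R^2+3 := by positivity
  have ht : 0 < Real.sqrt (R^2+3) := Real.sqrt_pos.mpr hs
  have hN : HasDerivAt (fun x:ℝ => 2*(x^4-18*x^2+9)) (2*(4*R^3-36*R)) R := by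
    have h4 := hasDerivAt_pow 4 R
    have h2 := hasDerivAt_pow 2 R
    exact (((h4.sub (h2.const_mul (18:ℝ))).add_const 9).const_mul (2:ℝ)).congr_deriv
      (by push_cast; ring)
  have hpow : HasDerivAt (fun x:ℝ => (x^2+3)^((3:ℝ)/2))
      (2*R*((3:ℝ)/2)*(R^2+3)^((3:ℝ)/2-1)) R := by
    have hb : HasDerivAt (fun x:ℝ => x^2+3) (2*R) R := by
      exact ((hasDerivAt_pow 2 R).add_const 3).congr_deriv (by push_cast; ring)
    exact hb.rpow_const (Or.inl hs.ne')
  have hlin : HasDerivAt (fun x:ℝ => Real.sqrt 3 * x) (Real.sqrt 3) R := by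
    exact ((hasDerivAt_id R).const_mul (Real.sqrt 3)).congr_deriv (by ring)
  have hD := hlin.mul hpow
  have hDne : Real.sqrt 3 * R * (R^2+3)^((3:ℝ)/2) ≠ 0 := by positivity
  have hdiv := hN.div hD hDne
  refine hdiv.congr_deriv (Eq.symm ?_)
  simp only [Pi.mul_apply]
  unfold gg
  have e32 : (R^2+3) ^ ((3:ℝ)/2) = Real.sqrt (R^2+3) ^ 3 := by
    rw [show (3:ℝ)/2 = ((3:ℕ):ℝ)/2 by norm_num, rp_half _ hs.le]
  have e12 : (R^2+3) ^ ((3:ℝ)/2 - 1) = Real.sqrt (R^2+3) ^ 1 := by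
    rw [show (3:ℝ)/2 - 1 = ((1:ℕ):ℝ)/2 by norm_num, rp_half _ hs.le]
  have e52 : (R^2+3) ^ ((5:ℝ)/2) = Real.sqrt (R^2+3) ^ 5 := by
    rw [show (5:ℝ)/2 = ((5:ℕ):ℝ)/2 by norm_num, rp_half _ hs.le]
  rw [e32, e12, e52]
  have ht2 : Real.sqrt (R^2+3) ^ 2 = R^2+3 := Real.sq_sqrt hs.le
  have h32 : Real.sqrt 3 ^ 2 = 3 := Real.sq_sqrt (by norm_num)
  set t := Real.sqrt (R^2+3)
  set s := Real.sqrt 3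
  field_simp
  linear_combination ((9:ℝ) + 18*R^2 - 3*R^4) * ht2

noncomputable def hh (R:ℝ) : ℝ :=
  2/Real.sqrt 3 * (-135*R^6+720*R^4+189*R^2+162) / (R^3 * (R^2+3) ^ ((7:ℝ)/2))

lemma hasDeriv_gg (R:ℝ) (hR:0<R) : HasDerivAt gg (hh R) R := by
  have h3 : (0:ℝ) < Real.sqrt 3 := by positivity
  have hs : (0:ℝ) < R^2+3 := by positivity
  have ht : 0 < Real.sqrt (R^2+3) := Real.sqrt_pos.mpr hs
  have hN : HasDerivAt (fun x:ℝ => 2/Real.sqrt 3*(45*x^4-90*x^2-27))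
      (2/Real.sqrt 3*(180*R^3-180*R)) R := by
    have h4 := hasDerivAt_pow 4 R
    have h2 := hasDerivAt_pow 2 R
    exact ((((h4.const_mul (45:ℝ)).sub (h2.const_mul (90:ℝ))).sub_const 27).const_mul
      (2/Real.sqrt 3)).congr_deriv (by push_cast; ring)
  have hpow : HasDerivAt (fun x:ℝ => (x^2+3)^((5:ℝ)/2))
      (2*R*((5:ℝ)/2)*(R^2+3)^((5:ℝ)/2-1)) R := by
    have hb : HasDerivAt (fun x:ℝ => x^2+3) (2*R) R := by
      exact ((hasDerivAt_pow 2 R).add_const 3).congr_deriv (by push_cast; ring)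
    exact hb.rpow_const (Or.inl hs.ne')
  have hsq : HasDerivAt (fun x:ℝ => x^2) (2*R) R := by
    exact (hasDerivAt_pow 2 R).congr_deriv (by push_cast; ring)
  have hD := hsq.mul hpow
  have hDne : R^2 * (R^2+3)^((5:ℝ)/2) ≠ 0 := by positivity
  have hdiv := hN.div hD hDne
  have hfun : gg = fun x => 2/Real.sqrt 3*(45*x^4-90*x^2-27) / (x^2 * (x^2+3)^((5:ℝ)/2)) := by
    funext x; rfl
  rw [hfun]
  refine hdiv.congr_deriv (Eq.symm ?_)
  simp only [Pi.mul_apply]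
  unfold hh
  have e52 : (R^2+3) ^ ((5:ℝ)/2) = Real.sqrt (R^2+3) ^ 5 := by
    rw [show (5:ℝ)/2 = ((5:ℕ):ℝ)/2 by norm_num, rp_half _ hs.le]
  have e32 : (R^2+3) ^ ((5:ℝ)/2 - 1) = Real.sqrt (R^2+3) ^ 3 := by
    rw [show (5:ℝ)/2 - 1 = ((3:ℕ):ℝ)/2 by norm_num, rp_half _ hs.le]
  have e72 : (R^2+3) ^ ((7:ℝ)/2) = Real.sqrt (R^2+3) ^ 7 := by
    rw [show (7:ℝ)/2 = ((7:ℕ):ℝ)/2 by norm_num, rp_half _ hs.le]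
  rw [e52, e32, e72]
  have ht2 : Real.sqrt (R^2+3) ^ 2 = R^2+3 := Real.sq_sqrt hs.le
  have h32 : Real.sqrt 3 ^ 2 = 3 := Real.sq_sqrt (by norm_num)
  set t := Real.sqrt (R^2+3)
  set s := Real.sqrt 3
  field_simp
  linear_combination ((-90:ℝ)*R^4 - 54) * ht2

/-- `e₂(R) = 2(R⁴-18R²+9)/(√3·R·(R²+3)^(3/2))` solves the stationary linearized equation
`e₂'' + (2/R)e₂' + 45 e₂/(3+R²)² = 0` for all `R > 0`. -/
theorem e2_solves_linearized (e₂ : ℝ → ℝ)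
    (he : ∀ R : ℝ, e₂ R = 2 * (R ^ 4 - 18 * R ^ 2 + 9)
      / (Real.sqrt 3 * R * (R ^ 2 + 3) ^ ((3:ℝ)/2))) :
    ∀ R : ℝ, 0 < R →
      deriv (deriv e₂) R + (2 / R) * deriv e₂ R + 45 * e₂ R / (3 + R ^ 2) ^ 2 = 0 := by
  have he' : e₂ = fun x => 2 * (x ^ 4 - 18 * x ^ 2 + 9)
      / (Real.sqrt 3 * x * (x ^ 2 + 3) ^ ((3:ℝ)/2)) := funext he
  subst he'
  intro R hR
  have hd1 : ∀ x : ℝ, 0 < x → deriv (fun x => 2 * (x ^ 4 - 18 * x ^ 2 + 9)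
      / (Real.sqrt 3 * x * (x ^ 2 + 3) ^ ((3:ℝ)/2))) x = gg x := by
    intro x hx
    exact (hasDeriv_e2 x hx).deriv
  have hev : deriv (fun x => 2 * (x ^ 4 - 18 * x ^ 2 + 9)
      / (Real.sqrt 3 * x * (x ^ 2 + 3) ^ ((3:ℝ)/2))) =ᶠ[nhds R] gg := by
    filter_upwards [eventually_gt_nhds hR] with x hx using hd1 x hx
  have h2 : deriv (deriv (fun x => 2 * (x ^ 4 - 18 * x ^ 2 + 9)
      / (Real.sqrt 3 * x * (x ^ 2 + 3) ^ ((3:ℝ)/2)))) R = hh R := by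
    rw [Filter.EventuallyEq.deriv_eq hev]
    exact (hasDeriv_gg R hR).deriv
  rw [h2, hd1 R hR]
  show hh R + 2 / R * gg R + 45 * (2 * (R ^ 4 - 18 * R ^ 2 + 9)
      / (Real.sqrt 3 * R * (R ^ 2 + 3) ^ ((3:ℝ)/2))) / (3 + R ^ 2) ^ 2 = 0
  unfold hh gg
  have h3 : (0:ℝ) < Real.sqrt 3 := by positivity
  have hs : (0:ℝ) < R^2+3 := by positivity
  have ht : 0 < Real.sqrt (R^2+3) := Real.sqrt_pos.mpr hs
  have e32 : (R^2+3) ^ ((3:ℝ)/2) = Real.sqrt (R^2+3) ^ 3 := by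
    rw [show (3:ℝ)/2 = ((3:ℕ):ℝ)/2 by norm_num, rp_half _ hs.le]
  have e52 : (R^2+3) ^ ((5:ℝ)/2) = Real.sqrt (R^2+3) ^ 5 := by
    rw [show (5:ℝ)/2 = ((5:ℕ):ℝ)/2 by norm_num, rp_half _ hs.le]
  have e72 : (R^2+3) ^ ((7:ℝ)/2) = Real.sqrt (R^2+3) ^ 7 := by
    rw [show (7:ℝ)/2 = ((7:ℕ):ℝ)/2 by norm_num, rp_half _ hs.le]
  rw [e32, e52, e72]
  have ht2 : Real.sqrt (R^2+3) ^ 2 = R^2+3 := Real.sq_sqrt hs.le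
  have h32 : Real.sqrt 3 ^ 2 = 3 := Real.sq_sqrt (by norm_num)
  have h33 : (3:ℝ) + R^2 = R^2 + 3 := by ring
  set t := Real.sqrt (R^2+3)
  set s := Real.sqrt 3
  field_simp
  linear_combination ((270:ℝ)*R^8 + (90:ℝ)*R^6*t^2 + (-630:ℝ)*R^6 +
    (-1620:ℝ)*R^4*t^2 + (-4698:ℝ)*R^4 + (810:ℝ)*R^2*t^2 + (-1458:ℝ)*R^2 +
    (-972:ℝ)) * ht2
end

section
/- For t > 0 and λ smooth and positive, ∂ₜ²(Q_{λ(t)}(r)) - √3·(2λ(t)λ''(t) - λ'(t)²)/(4r·λ(t)^(3/2)) = O(r^(-3)) as r → ∞; precisely, there is a constant C (depending on λ(t), λ'(t), λ''(t)) such that for all r ≥ λ(t), |∂ₜ²(Q_{λ(t)}(r)) - √3(2λ(t)λ''(t) - λ'(t)²)/(4 r λ(t)^(3/2))| ≤ C·λ(t)^(3/2)·(|λ''(t)|λ(t) + λ'(t)²)/r³. -/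
open Real
set_option maxHeartbeats 1000000


/-- For the rescaled soliton `Q_{λ(t)}(r) = √3 √(λ(t)) / √(r² + 3λ(t)²)` with `λ`
twice continuously differentiable and positive, at each fixed time `t` there is a
constant `C` such that for all `r ≥ λ(t)`,
`|∂ₜ²(Q_{λ(t)}(r)) - √3(2λλ'' - λ'²)/(4rλ^(3/2))| ≤ C λ^(3/2)(|λ''|λ + λ'²)/r³`. -/
theorem soliton_second_time_derivative_expansion (lam : ℝ → ℝ)
    (hlam : ContDiff ℝ 2 lam) (hpos : ∀ s, 0 < lam s) (t : ℝ) :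
    ∃ C : ℝ, 0 < C ∧ ∀ r : ℝ, lam t ≤ r →
      |deriv (deriv (fun s =>
          Real.sqrt 3 * Real.sqrt (lam s) / Real.sqrt (r ^ 2 + 3 * lam s ^ 2))) t
        - Real.sqrt 3 * (2 * lam t * deriv (deriv lam) t - (deriv lam t) ^ 2)
          / (4 * r * lam t ^ ((3:ℝ)/2))|
      ≤ C * lam t ^ ((3:ℝ)/2) * (|deriv (deriv lam) t| * lam t + (deriv lam t) ^ 2)
          / r ^ 3 := by
  have hdiff : Differentiable ℝ lam := hlam.differentiable (by norm_num)
  have hdiff' : Differentiable ℝ (deriv lam) := by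
    have h : ContDiff ℝ (1+1 : ℕ) lam := by exact_mod_cast hlam
    exact (((contDiff_succ_iff_deriv (n := 1)).mp (by simpa [one_add_one_eq_two] using hlam)).2.2).differentiable (by norm_num)
  have ha : 0 < lam t := hpos t
  refine ⟨34 * Real.sqrt 3 / lam t, by positivity, fun r hr => ?_⟩
  have hr0 : 0 < r := lt_of_lt_of_le ha hr
  -- abbreviations
  set a := lam t with ha_def
  set b := deriv lam t with hb_def
  set c := deriv (deriv lam) t with hc_def
  -- first derivative everywhere
  have key1 : ∀ s, HasDerivAt (fun s => Real.sqrt 3 * Real.sqrt (lam s) / Real.sqrt (r ^ 2 + 3 * lam s ^ 2))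
      (Real.sqrt 3 * (deriv lam s * (r ^ 2 - 3 * lam s ^ 2)) /
        (2 * Real.sqrt (lam s) * Real.sqrt (r ^ 2 + 3 * lam s ^ 2) ^ 3)) s := by
    intro s
    have hls := hpos s
    have hD : (0:ℝ) < r ^ 2 + 3 * lam s ^ 2 := by positivity
    have hsa : 0 < Real.sqrt (lam s) := Real.sqrt_pos.mpr hls
    have hsd : 0 < Real.sqrt (r ^ 2 + 3 * lam s ^ 2) := Real.sqrt_pos.mpr hD
    have hu : HasDerivAt (fun s => Real.sqrt (lam s)) (deriv lam s / (2 * Real.sqrt (lam s))) s :=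
      ((hdiff s).hasDerivAt).sqrt (ne_of_gt hls)
    have hDd : HasDerivAt (fun s => r ^ 2 + 3 * lam s ^ 2)
        (3 * (2 * lam s * deriv lam s)) s := by
      have h1 : HasDerivAt (fun s => lam s ^ 2) (2 * lam s * deriv lam s) s := by
        simpa [mul_comm, mul_assoc] using ((hdiff s).hasDerivAt).fun_pow 2
      simpa using (h1.const_mul 3).const_add (r ^ 2)
    have hv : HasDerivAt (fun s => Real.sqrt (r ^ 2 + 3 * lam s ^ 2))
        (3 * (2 * lam s * deriv lam s) / (2 * Real.sqrt (r ^ 2 + 3 * lam s ^ 2))) s :=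
      hDd.sqrt (ne_of_gt hD)
    have hF := (hu.const_mul (Real.sqrt 3)).fun_div hv (ne_of_gt hsd)
    refine hF.congr_deriv ?_
    have e1 : Real.sqrt (lam s) ^ 2 = lam s := Real.sq_sqrt hls.le
    have e2 : Real.sqrt (r ^ 2 + 3 * lam s ^ 2) ^ 2 = r ^ 2 + 3 * lam s ^ 2 := Real.sq_sqrt hD.le
    set sa := Real.sqrt (lam s)
    set sd := Real.sqrt (r ^ 2 + 3 * lam s ^ 2)
    rw [← e1] at e2 ⊢
    rw [show r ^ 2 = sd ^ 2 - 3 * (sa ^ 2) ^ 2 from by linarith]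
    field_simp
    ring
  -- second derivative at t
  have hD : (0:ℝ) < r ^ 2 + 3 * a ^ 2 := by positivity
  have hsa : 0 < Real.sqrt a := Real.sqrt_pos.mpr ha
  have hsd : 0 < Real.sqrt (r ^ 2 + 3 * a ^ 2) := Real.sqrt_pos.mpr hD
  have hu : HasDerivAt (fun s => Real.sqrt (lam s)) (b / (2 * Real.sqrt a)) t :=
    ((hdiff t).hasDerivAt).sqrt (ne_of_gt ha)
  have hDd : HasDerivAt (fun s => r ^ 2 + 3 * lam s ^ 2) (3 * (2 * a * b)) t := by
    have h1 : HasDerivAt (fun s => lam s ^ 2) (2 * a * b) t := by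
      simpa [mul_comm, mul_assoc] using ((hdiff t).hasDerivAt).fun_pow 2
    simpa using (h1.const_mul 3).const_add (r ^ 2)
  have hv : HasDerivAt (fun s => Real.sqrt (r ^ 2 + 3 * lam s ^ 2))
      (3 * (2 * a * b) / (2 * Real.sqrt (r ^ 2 + 3 * a ^ 2))) t :=
    hDd.sqrt (ne_of_gt hD)
  have hNu : HasDerivAt (fun s => deriv lam s * (r ^ 2 - 3 * lam s ^ 2))
      (c * (r ^ 2 - 3 * a ^ 2) + b * (-(3 * (2 * a * b)))) t := by
    have h1 : HasDerivAt (fun s => lam s ^ 2) (2 * a * b) t := by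
      simpa [mul_comm, mul_assoc] using ((hdiff t).hasDerivAt).fun_pow 2
    have h2 : HasDerivAt (fun s => r ^ 2 - 3 * lam s ^ 2) (-(3 * (2 * a * b))) t := by
      simpa using ((h1.const_mul 3).const_sub (r ^ 2))
    exact ((hdiff' t).hasDerivAt).mul h2
  have hDe : HasDerivAt (fun s => 2 * Real.sqrt (lam s) * Real.sqrt (r ^ 2 + 3 * lam s ^ 2) ^ 3)
      (2 * (b / (2 * Real.sqrt a)) * Real.sqrt (r ^ 2 + 3 * a ^ 2) ^ 3
        + 2 * Real.sqrt a * (3 * Real.sqrt (r ^ 2 + 3 * a ^ 2) ^ 2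
            * (3 * (2 * a * b) / (2 * Real.sqrt (r ^ 2 + 3 * a ^ 2))))) t := by
    have h3 : HasDerivAt (fun s => Real.sqrt (r ^ 2 + 3 * lam s ^ 2) ^ 3)
        (3 * Real.sqrt (r ^ 2 + 3 * a ^ 2) ^ 2
          * (3 * (2 * a * b) / (2 * Real.sqrt (r ^ 2 + 3 * a ^ 2)))) t := by
      simpa [mul_comm, mul_assoc] using hv.fun_pow 3
    exact (hu.const_mul 2).mul h3
  have hDe0 : 2 * Real.sqrt a * Real.sqrt (r ^ 2 + 3 * a ^ 2) ^ 3 ≠ 0 := by positivity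
  have hNum : HasDerivAt (fun s => Real.sqrt 3 * (deriv lam s * (r ^ 2 - 3 * lam s ^ 2)))
      (Real.sqrt 3 * (c * (r ^ 2 - 3 * a ^ 2) + b * (-(3 * (2 * a * b))))) t := hNu.const_mul _
  have hG := hNum.fun_div hDe hDe0
  -- identify deriv (deriv F) t
  have hdF : deriv (fun s => Real.sqrt 3 * Real.sqrt (lam s) / Real.sqrt (r ^ 2 + 3 * lam s ^ 2))
      = fun s => Real.sqrt 3 * (deriv lam s * (r ^ 2 - 3 * lam s ^ 2)) /
        (2 * Real.sqrt (lam s) * Real.sqrt (r ^ 2 + 3 * lam s ^ 2) ^ 3) :=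
    funext fun s => (key1 s).deriv
  rw [hdF, hG.deriv]
  -- now pure inequality
  set sa := Real.sqrt a with hsa_def
  set sd := Real.sqrt (r ^ 2 + 3 * a ^ 2) with hsd_def
  have e1 : sa ^ 2 = a := Real.sq_sqrt ha.le
  have e2 : sd ^ 2 = r ^ 2 + 3 * a ^ 2 := Real.sq_sqrt hD.le
  have hsdr : r ≤ sd := by
    rw [hsd_def]
    nlinarith [Real.sq_sqrt hD.le, Real.sqrt_nonneg (r ^ 2 + 3 * a ^ 2), sq_nonneg a]
  have h32 : a ^ ((3:ℝ)/2) = sa ^ 3 := by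
    rw [hsa_def, Real.sqrt_eq_rpow, ← Real.rpow_natCast (a ^ ((1:ℝ)/2)) 3,
      ← Real.rpow_mul ha.le]
    norm_num
  rw [h32]
  -- rewrite LHS value into A/sd - B/sd^3 + E/sd^5 form
  have hval : (Real.sqrt 3 * (c * (r ^ 2 - 3 * a ^ 2) + b * (-(3 * (2 * a * b)))) *
        (2 * sa * sd ^ 3) -
        Real.sqrt 3 * (b * (r ^ 2 - 3 * a ^ 2)) *
          (2 * (b / (2 * sa)) * sd ^ 3 +
            2 * sa * (3 * sd ^ 2 * (3 * (2 * a * b) / (2 * sd))))) /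
        (2 * sa * sd ^ 3) ^ 2
      = Real.sqrt 3 * ((c / (2 * sa) - b ^ 2 / (4 * sa ^ 3)) / sd
          - (3 * c * sa ^ 3 + 6 * sa * b ^ 2) / sd ^ 3
          + 27 * sa ^ 5 * b ^ 2 / sd ^ 5) := by
    rw [← e1] at e2 ⊢
    rw [show r ^ 2 = sd ^ 2 - 3 * (sa ^ 2) ^ 2 from by linarith]
    field_simp
    ring
  rw [hval]
  have hs3 : (0:ℝ) ≤ Real.sqrt 3 := Real.sqrt_nonneg 3
  have hr3 : (0:ℝ) < r ^ 3 := pow_pos hr0 3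
  set A := c / (2 * sa) - b ^ 2 / (4 * sa ^ 3) with hA_def
  have hsplit : Real.sqrt 3 * (A / sd - (3 * c * sa ^ 3 + 6 * sa * b ^ 2) / sd ^ 3
        + 27 * sa ^ 5 * b ^ 2 / sd ^ 5)
      - Real.sqrt 3 * (2 * a * c - b ^ 2) / (4 * r * sa ^ 3)
      = Real.sqrt 3 * (A * (sd⁻¹ - r⁻¹) - (3 * c * sa ^ 3 + 6 * sa * b ^ 2) / sd ^ 3
        + 27 * sa ^ 5 * b ^ 2 / sd ^ 5) := by
    rw [hA_def, ← e1]
    field_simp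
    ring
  rw [hsplit]
  -- term bounds
  have t1 : |A * (sd⁻¹ - r⁻¹)| ≤ (3/4 * sa ^ 3 * |c| + 3/8 * sa * b ^ 2) / r ^ 3 := by
    rw [abs_mul]
    have habsA : |A| ≤ |c| / (2 * sa) + b ^ 2 / (4 * sa ^ 3) := by
      calc |A| ≤ |c / (2 * sa)| + |b ^ 2 / (4 * sa ^ 3)| := abs_sub _ _
        _ = |c| / (2 * sa) + b ^ 2 / (4 * sa ^ 3) := by
            rw [abs_div, abs_div, abs_of_pos (by positivity : (0:ℝ) < 2 * sa),
              abs_of_pos (by positivity : (0:ℝ) < 4 * sa ^ 3), abs_of_nonneg (sq_nonneg b)]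
    have hle : sd⁻¹ ≤ r⁻¹ := by
      exact inv_anti₀ hr0 hsdr
    have hinv : |sd⁻¹ - r⁻¹| ≤ 3 * sa ^ 4 / (2 * r ^ 3) := by
      rw [abs_of_nonpos (by linarith)]
      have ha4 : sa ^ 4 = a ^ 2 := by rw [show sa ^ 4 = (sa ^ 2) ^ 2 by ring, e1]
      have key : 0 ≤ (sd - r) * ((sd + r) * r * sd - 2 * r ^ 3) :=
        mul_nonneg (by linarith) (by nlinarith)
      rw [show -(sd⁻¹ - r⁻¹) = (sd - r) / (r * sd) from by
        field_simp
        ring]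
      rw [div_le_div_iff₀ (by positivity) (by positivity)]
      have h3a : 3 * sa ^ 4 * (r * sd) = (sd - r) * ((sd + r) * (r * sd)) := by
        linear_combination 3 * (r * sd) * ha4 - (r * sd) * e2
      nlinarith [key, h3a]
    calc |A| * |sd⁻¹ - r⁻¹| ≤ (|c| / (2 * sa) + b ^ 2 / (4 * sa ^ 3)) * (3 * sa ^ 4 / (2 * r ^ 3)) :=
        mul_le_mul habsA hinv (abs_nonneg _) (by positivity)
      _ = (3/4 * sa ^ 3 * |c| + 3/8 * sa * b ^ 2) / r ^ 3 := by field_simp; ring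
  have t2 : |(3 * c * sa ^ 3 + 6 * sa * b ^ 2) / sd ^ 3| ≤ (3 * sa ^ 3 * |c| + 6 * sa * b ^ 2) / r ^ 3 := by
    rw [abs_div, abs_of_pos (pow_pos hsd 3)]
    have hN : |3 * c * sa ^ 3 + 6 * sa * b ^ 2| ≤ 3 * sa ^ 3 * |c| + 6 * sa * b ^ 2 := by
      calc |3 * c * sa ^ 3 + 6 * sa * b ^ 2| ≤ |3 * c * sa ^ 3| + |6 * sa * b ^ 2| := abs_add_le _ _
        _ = 3 * sa ^ 3 * |c| + 6 * sa * b ^ 2 := by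
            rw [abs_mul, abs_mul, abs_of_nonneg (by norm_num : (0:ℝ) ≤ 3),
              abs_of_nonneg (pow_nonneg hsa.le 3),
              abs_of_nonneg (by positivity : (0:ℝ) ≤ 6 * sa * b ^ 2)]
            ring
    gcongr
  have t3 : |27 * sa ^ 5 * b ^ 2 / sd ^ 5| ≤ 27 * sa * b ^ 2 / r ^ 3 := by
    rw [abs_of_nonneg (by positivity)]
    rw [div_le_div_iff₀ (by positivity) (by positivity)]
    have ha4 : sa ^ 4 ≤ r ^ 2 := by nlinarith [e1, hr, ha]
    have h5 : r ^ 5 ≤ sd ^ 5 := pow_le_pow_left₀ hr0.le hsdr 5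
    calc 27 * sa ^ 5 * b ^ 2 * r ^ 3 = 27 * sa * b ^ 2 * (sa ^ 4 * r ^ 3) := by ring
      _ ≤ 27 * sa * b ^ 2 * (r ^ 2 * r ^ 3) := by
          apply mul_le_mul_of_nonneg_left _ (by positivity)
          exact mul_le_mul_of_nonneg_right ha4 (by positivity)
      _ = 27 * sa * b ^ 2 * r ^ 5 := by ring
      _ ≤ 27 * sa * b ^ 2 * sd ^ 5 := mul_le_mul_of_nonneg_left h5 (by positivity)
  have hX : |A * (sd⁻¹ - r⁻¹) - (3 * c * sa ^ 3 + 6 * sa * b ^ 2) / sd ^ 3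
      + 27 * sa ^ 5 * b ^ 2 / sd ^ 5| ≤ 34 * (sa ^ 3 * |c| + sa * b ^ 2) / r ^ 3 := by
    have tri : |A * (sd⁻¹ - r⁻¹) - (3 * c * sa ^ 3 + 6 * sa * b ^ 2) / sd ^ 3
        + 27 * sa ^ 5 * b ^ 2 / sd ^ 5|
        ≤ |A * (sd⁻¹ - r⁻¹)| + |(3 * c * sa ^ 3 + 6 * sa * b ^ 2) / sd ^ 3|
          + |27 * sa ^ 5 * b ^ 2 / sd ^ 5| := by
      calc _ ≤ |A * (sd⁻¹ - r⁻¹) - (3 * c * sa ^ 3 + 6 * sa * b ^ 2) / sd ^ 3|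
            + |27 * sa ^ 5 * b ^ 2 / sd ^ 5| := abs_add_le _ _
        _ ≤ _ := by
            have := abs_sub (A * (sd⁻¹ - r⁻¹)) ((3 * c * sa ^ 3 + 6 * sa * b ^ 2) / sd ^ 3)
            linarith
    have hsum : (3/4 * sa ^ 3 * |c| + 3/8 * sa * b ^ 2) / r ^ 3
        + (3 * sa ^ 3 * |c| + 6 * sa * b ^ 2) / r ^ 3 + 27 * sa * b ^ 2 / r ^ 3
        ≤ 34 * (sa ^ 3 * |c| + sa * b ^ 2) / r ^ 3 := by
      rw [← add_div, ← add_div]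
      gcongr ?_ / _
      have h1 : 0 ≤ sa ^ 3 * |c| := mul_nonneg (pow_nonneg hsa.le 3) (abs_nonneg c)
      have h2 : 0 ≤ sa * b ^ 2 := mul_nonneg hsa.le (sq_nonneg b)
      linarith
    linarith
  calc |Real.sqrt 3 * (A * (sd⁻¹ - r⁻¹) - (3 * c * sa ^ 3 + 6 * sa * b ^ 2) / sd ^ 3
        + 27 * sa ^ 5 * b ^ 2 / sd ^ 5)|
      = Real.sqrt 3 * |A * (sd⁻¹ - r⁻¹) - (3 * c * sa ^ 3 + 6 * sa * b ^ 2) / sd ^ 3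
        + 27 * sa ^ 5 * b ^ 2 / sd ^ 5| := by rw [abs_mul, abs_of_nonneg hs3]
    _ ≤ Real.sqrt 3 * (34 * (sa ^ 3 * |c| + sa * b ^ 2) / r ^ 3) :=
        mul_le_mul_of_nonneg_left hX hs3
    _ = 34 * Real.sqrt 3 / a * sa ^ 3 * (|c| * a + b ^ 2) / r ^ 3 := by
        rw [← e1]; field_simp
end
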